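/- arXiv:1307.3478 — 3 statements merged into one kernel-verified Lean document; each statement's English description precedes it below -/
import Mathlib

section
/- For t > 0 and k ≠ 0, the nonzero eigenvalues of the operator k²A on L²([0,t);ℂ), where (Af)(s) = ∫_s^t ∫_0^r f(τ) dτ dr, are exactly λ_n = k² t² / ((n - 1/2)² π²) for n = 1, 2, 3, ..., each with one-dimensional eigenspace spanned by s ↦ cos((n - 1/2)π s / t). -/
open MeasureTheory Real

section Aux
open Set Topology Filter
open scoped ENNReal

lemma const_on_Icc {W : ℝ → ℂ} {a b : ℝ} (hab : a < b) (hW : Continuous W)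
    (hd : ∀ x ∈ Set.Ioo a b, HasDerivAt W 0 x) : ∀ x ∈ Set.Icc a b, W x = W a := by
  have hIoo : ∀ x ∈ Set.Ioo a b, W b = W x := by
    intro x hx
    have h := constant_of_has_deriv_right_zero (f := W) (a := x) (b := b)
      (hW.continuousOn)
      (fun y hy => (hd y ⟨lt_of_lt_of_le hx.1 hy.1, hy.2⟩).hasDerivWithinAt)
    exact h b ⟨le_of_lt hx.2, le_refl b⟩
  have hab' : W a = W b := by
    have hne : (𝓝[Set.Ioo a b] a).NeBot := by
      rw [← mem_closure_iff_nhdsWithin_neBot, closure_Ioo hab.ne]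
      exact ⟨le_refl a, hab.le⟩
    have h1 : Filter.Tendsto W (𝓝[Set.Ioo a b] a) (𝓝 (W a)) :=
      (hW.continuousAt.continuousWithinAt).tendsto
    have h2 : Filter.Tendsto W (𝓝[Set.Ioo a b] a) (𝓝 (W b)) := by
      apply Filter.Tendsto.congr' _ tendsto_const_nhds
      filter_upwards [self_mem_nhdsWithin] with x hx
      exact hIoo x hx
    exact tendsto_nhds_unique h1 h2
  intro x hx
  rcases eq_or_lt_of_le hx.1 with h | h
  · rw [← h]
  rcases eq_or_lt_of_le hx.2 with h' | h'
  · rw [h', ← hab']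
  · rw [← hIoo x ⟨h, h'⟩, ← hab']

lemma key_ode (t : ℝ) (ht : 0 < t) (μ ω : ℂ) (hω : ω ^ 2 = μ) (hωne : ω ≠ 0)
    (u : ℝ → ℂ) (hu : Integrable u)
    (hcons : ∀ s ∈ Set.Ico (0:ℝ) t, u s = μ * ∫ r in s..t, ∫ τ in (0:ℝ)..r, u τ) :
    ∀ s ∈ Set.Icc (0:ℝ) t,
      (μ * ∫ r in s..t, ∫ τ in (0:ℝ)..r, u τ) =
      (μ * ∫ r in (0:ℝ)..t, ∫ τ in (0:ℝ)..r, u τ) * Complex.cos (ω * s) := by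
  have hui : ∀ a b : ℝ, IntervalIntegrable u volume a b := fun a b => hu.intervalIntegrable
  set F : ℝ → ℂ := fun r => ∫ τ in (0:ℝ)..r, u τ with hFdef
  have hF : Continuous F := intervalIntegral.continuous_primitive hui 0
  have hFi : ∀ a b : ℝ, IntervalIntegrable F volume a b := fun a b =>
    (hF.intervalIntegrable a b)
  set g : ℝ → ℂ := fun s => μ * ∫ r in s..t, F r with hgdef
  have hgeq : ∀ s, g s = μ * ((∫ r in (0:ℝ)..t, F r) - ∫ r in (0:ℝ)..s, F r) := by
    intro s
    rw [hgdef]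
    rw [intervalIntegral.integral_interval_sub_left (hFi 0 t) (hFi 0 s)]
  have hP : Continuous (fun s => ∫ r in (0:ℝ)..s, F r) :=
    intervalIntegral.continuous_primitive hFi 0
  have hg : Continuous g := by
    rw [show g = fun s => μ * ((∫ r in (0:ℝ)..t, F r) - ∫ r in (0:ℝ)..s, F r) from
      funext hgeq]
    exact continuous_const.mul (continuous_const.sub hP)
  have hg' : ∀ s : ℝ, HasDerivAt g (-μ * F s) s := by
    intro s
    have h1 : HasDerivAt (fun x => ∫ r in (0:ℝ)..x, F r) (F s) s :=
      intervalIntegral.integral_hasDerivAt_right (hFi 0 s)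
        (hF.stronglyMeasurable.stronglyMeasurableAtFilter) hF.continuousAt
    have h2 : HasDerivAt (fun x => μ * ((∫ r in (0:ℝ)..t, F r) - ∫ r in (0:ℝ)..x, F r))
        (μ * (0 - F s)) s := (((hasDerivAt_const s _).sub h1).const_mul μ)
    have h3 : g = fun x => μ * ((∫ r in (0:ℝ)..t, F r) - ∫ r in (0:ℝ)..x, F r) :=
      funext hgeq
    rw [h3]
    convert h2 using 1; ring
  have hug : ∀ x ∈ Set.Ico (0:ℝ) t, u x = g x := hcons
  have hF' : ∀ s ∈ Set.Ioo (0:ℝ) t, HasDerivAt F (g s) s := by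
    intro s hs
    have hev : u =ᶠ[𝓝 s] g := by
      filter_upwards [Ioo_mem_nhds hs.1 hs.2] with x hx
      exact hug x ⟨hx.1.le, hx.2⟩
    have hcu : ContinuousAt u s := hg.continuousAt.congr hev.symm
    have h1 : HasDerivAt F (u s) s :=
      intervalIntegral.integral_hasDerivAt_right (hui 0 s)
        (hu.aestronglyMeasurable.stronglyMeasurableAtFilter) hcu
    rwa [hug s ⟨hs.1.le, hs.2⟩] at h1
  have hccos : ∀ x : ℝ, HasDerivAt (fun y : ℝ => Complex.cos (ω * y))
      (-ω * Complex.sin (ω * x)) x := by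
    intro x
    have h1 : HasDerivAt (fun z : ℂ => Complex.cos (ω * z))
        (-Complex.sin (ω * x) * (ω * 1)) x :=
      (Complex.hasDerivAt_cos (ω * x)).comp (x : ℂ) ((hasDerivAt_id (x : ℂ)).const_mul ω)
    have h2 := h1.comp_ofReal
    convert h2 using 1; ring
  have hcsin : ∀ x : ℝ, HasDerivAt (fun y : ℝ => Complex.sin (ω * y))
      (ω * Complex.cos (ω * x)) x := by
    intro x
    have h1 : HasDerivAt (fun z : ℂ => Complex.sin (ω * z))
        (Complex.cos (ω * x) * (ω * 1)) x :=
      (Complex.hasDerivAt_sin (ω * x)).comp (x : ℂ) ((hasDerivAt_id (x : ℂ)).const_mul ω)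
    have h2 := h1.comp_ofReal
    convert h2 using 1; ring
  set W : ℝ → ℂ := fun s => (-μ * F s) * Complex.cos (ω * s) + ω * g s * Complex.sin (ω * s)
    with hWdef
  set V : ℝ → ℂ := fun s => (-μ * F s) * Complex.sin (ω * s) - ω * g s * Complex.cos (ω * s)
    with hVdef
  have hcos_cont : Continuous (fun s : ℝ => Complex.cos (ω * s)) :=
    Complex.continuous_cos.comp (continuous_const.mul Complex.continuous_ofReal)
  have hsin_cont : Continuous (fun s : ℝ => Complex.sin (ω * s)) :=
    Complex.continuous_sin.comp (continuous_const.mul Complex.continuous_ofReal)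
  have hWc : Continuous W :=
    ((continuous_const.mul hF).mul hcos_cont).add ((continuous_const.mul hg).mul hsin_cont)
  have hVc : Continuous V :=
    ((continuous_const.mul hF).mul hsin_cont).sub ((continuous_const.mul hg).mul hcos_cont)
  have hW' : ∀ s ∈ Set.Ioo (0:ℝ) t, HasDerivAt W 0 s := by
    intro s hs
    have h1 : HasDerivAt (fun x => -μ * F x) (-μ * g s) s := (hF' s hs).const_mul (-μ)
    have h2 : HasDerivAt (fun x => ω * g x) (ω * (-μ * F s)) s := (hg' s).const_mul ω
    have h3 := (h1.mul (hccos s)).add (h2.mul (hcsin s))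
    refine h3.congr_deriv ?_
    linear_combination (g s * Complex.cos (ω * s)) * hω
  have hV' : ∀ s ∈ Set.Ioo (0:ℝ) t, HasDerivAt V 0 s := by
    intro s hs
    have h1 : HasDerivAt (fun x => -μ * F x) (-μ * g s) s := (hF' s hs).const_mul (-μ)
    have h2 : HasDerivAt (fun x => ω * g x) (ω * (-μ * F s)) s := (hg' s).const_mul ω
    have h3 := (h1.mul (hcsin s)).sub (h2.mul (hccos s))
    refine h3.congr_deriv ?_
    linear_combination (g s * Complex.sin (ω * s)) * hω
  have hWconst := const_on_Icc ht hWc hW'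
  have hVconst := const_on_Icc ht hVc hV'
  have hF0 : F 0 = 0 := intervalIntegral.integral_same
  have hW0 : W 0 = 0 := by simp [hWdef, hF0]
  have hV0 : V 0 = -(ω * g 0) := by simp [hVdef, hF0]
  intro s hs
  show g s = g 0 * Complex.cos (ω * s)
  have e1 : (-μ * F s) * Complex.cos (ω * s) + ω * g s * Complex.sin (ω * s) = 0 := by
    have := hWconst s hs; rw [hW0] at this; exact this
  have e2 : (-μ * F s) * Complex.sin (ω * s) - ω * g s * Complex.cos (ω * s) = -(ω * g 0) := by
    have := hVconst s hs; rw [hV0] at this; exact this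
  have e3 : ω * g s = ω * (g 0 * Complex.cos (ω * s)) := by
    linear_combination (Complex.sin (ω * s)) * e1 - (Complex.cos (ω * s)) * e2 +
      (-(ω * g s)) * (Complex.sin_sq_add_cos_sq (ω * s))
  exact mul_left_cancel₀ hωne e3

lemma restrict_finite (t : ℝ) : IsFiniteMeasure (volume.restrict (Set.Ico (0:ℝ) t)) := by
  constructor
  rw [Measure.restrict_apply_univ, Real.volume_Ico]
  exact ENNReal.ofReal_lt_top


lemma int_cos (c : ℝ) (hc : c ≠ 0) (a b : ℝ) :
    ∫ x in a..b, Real.cos (c * x) = (Real.sin (c * b) - Real.sin (c * a)) / c := by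
  rw [intervalIntegral.integral_comp_mul_left Real.cos hc, integral_cos, smul_eq_mul]
  ring

lemma int_sin (c : ℝ) (hc : c ≠ 0) (a b : ℝ) :
    ∫ x in a..b, Real.sin (c * x) = (Real.cos (c * a) - Real.cos (c * b)) / c := by
  rw [intervalIntegral.integral_comp_mul_left Real.sin hc, integral_sin, smul_eq_mul]
  ring


lemma eigenvalue_of_cos_zero (t k : ℝ) (ht : 0 < t) (hk : k ≠ 0) (lam ω : ℂ)
    (hlam : lam ≠ 0) (hω : ω ^ 2 = (k:ℂ)^2 / lam) (hcos : Complex.cos (ω * t) = 0) :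
    ∃ n : ℕ, 1 ≤ n ∧ lam = ((k^2 * t^2 / (((n:ℝ) - 1/2)^2 * π^2) : ℝ) : ℂ) := by
  obtain ⟨m, hm⟩ := Complex.cos_eq_zero_iff.mp hcos
  have h3 : (ω * (t:ℂ))^2 = ((2*(m:ℂ)+1) * (π:ℂ)/2)^2 := by rw [hm]
  have h2 : ((k:ℂ)^2/lam) * (t:ℂ)^2 = ((2*(m:ℂ)+1) * (π:ℂ)/2)^2 := by
    linear_combination h3 - (t:ℂ)^2 * hω
  obtain ⟨n, hn1, hncast⟩ : ∃ n : ℕ, 1 ≤ n ∧ ((n:ℂ) - 1/2)^2 = ((2*(m:ℂ)+1)/2)^2 := by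
    rcases le_or_gt 0 m with h | h
    · refine ⟨m.toNat + 1, by omega, ?_⟩
      have e : (((m.toNat + 1 : ℕ)) : ℂ) = (m:ℂ) + 1 := by
        exact_mod_cast congrArg (fun z : ℤ => (z : ℂ))
          (show ((m.toNat : ℤ) + 1 = m + 1) by omega)
      rw [e]; ring
    · refine ⟨(-m).toNat, by omega, ?_⟩
      have e : ((((-m).toNat : ℕ)) : ℂ) = -(m:ℂ) := by
        exact_mod_cast congrArg (fun z : ℤ => (z : ℂ))
          (show (((-m).toNat : ℤ) = -m) from Int.toNat_of_nonneg (by omega))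
      rw [e]; ring
  refine ⟨n, hn1, ?_⟩
  have hπ : (π:ℂ) ≠ 0 := Complex.ofReal_ne_zero.2 Real.pi_ne_zero
  have htc : (t:ℂ) ≠ 0 := Complex.ofReal_ne_zero.2 ht.ne'
  have hkc : (k:ℂ) ≠ 0 := Complex.ofReal_ne_zero.2 hk
  have hm0 : (2*(m:ℂ)+1) ≠ 0 := by
    have h5 : (2*m+1 : ℤ) ≠ 0 := by omega
    have := Int.cast_ne_zero (α := ℂ) |>.2 h5
    push_cast at this
    convert this using 1
  push_cast
  rw [hncast]
  have h6 : ((2*(m:ℂ)+1)/2)^2 * (π:ℂ)^2 ≠ 0 := by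
    apply mul_ne_zero (pow_ne_zero 2 (div_ne_zero hm0 two_ne_zero)) (pow_ne_zero 2 hπ)
  have h2' : (k:ℂ)^2 * t^2 * 4 = lam * (2*(m:ℂ)+1)^2 * (π:ℂ)^2 := by
    field_simp at h2
    linear_combination h2
  field_simp
  linear_combination -h2'


lemma structure_lemma (t k : ℝ) (ht : 0 < t) (hk : k ≠ 0)
    (A : Lp ℂ 2 (volume.restrict (Set.Ico (0:ℝ) t)) →L[ℂ]
         Lp ℂ 2 (volume.restrict (Set.Ico (0:ℝ) t)))
    (hA : ∀ f : Lp ℂ 2 (volume.restrict (Set.Ico (0:ℝ) t)),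
      ∀ᵐ s ∂(volume.restrict (Set.Ico (0:ℝ) t)),
        A f s = ∫ r in s..t, (∫ τ in (0:ℝ)..r, f τ))
    (lam : ℂ) (hlam : lam ≠ 0) (ω : ℂ) (hω : ω ^ 2 = (k:ℂ)^2 / lam) (hωne : ω ≠ 0)
    (f : Lp ℂ 2 (volume.restrict (Set.Ico (0:ℝ) t)))
    (hf : ((k:ℂ)^2) • A f = lam • f) :
    ∃ c : ℂ, (∀ᵐ s ∂(volume.restrict (Set.Ico (0:ℝ) t)),
        f s = c * Complex.cos (ω * s)) ∧
      c * Complex.cos (ω * t) = 0 ∧ (c = 0 → f = 0) := by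
  haveI := restrict_finite t
  set μc : ℂ := (k:ℂ)^2 / lam with hμc
  have hkc : (k:ℂ) ≠ 0 := Complex.ofReal_ne_zero.2 hk
  have hμne : μc ≠ 0 := div_ne_zero (pow_ne_zero 2 hkc) hlam
  -- a.e. integral equation
  have hae : ∀ᵐ s ∂(volume.restrict (Set.Ico (0:ℝ) t)),
      f s = μc * ∫ r in s..t, ∫ τ in (0:ℝ)..r, f τ := by
    have h1 := hA f
    have h2 : ⇑(((k:ℂ)^2) • A f) =ᵐ[volume.restrict (Set.Ico (0:ℝ) t)]
        fun s => ((k:ℂ)^2) * (A f) s := by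
      filter_upwards [Lp.coeFn_smul ((k:ℂ)^2) (A f)] with s hs
      simpa [smul_eq_mul] using hs
    have h3 : ⇑(lam • f) =ᵐ[volume.restrict (Set.Ico (0:ℝ) t)] fun s => lam * f s := by
      filter_upwards [Lp.coeFn_smul lam f] with s hs
      simpa [smul_eq_mul] using hs
    have h4 : ⇑(((k:ℂ)^2) • A f) =ᵐ[volume.restrict (Set.Ico (0:ℝ) t)] ⇑(lam • f) := by
      rw [hf]
    filter_upwards [h1, h2, h3, h4] with s e1 e2 e3 e4
    have e5 : ((k:ℂ)^2) * (A f) s = lam * f s := by rw [← e2, e4, e3]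
    rw [e1] at e5
    rw [hμc]
    field_simp
    linear_combination -e5
  set G : ℝ → ℂ := fun s => μc * ∫ r in s..t, ∫ τ in (0:ℝ)..r, f τ with hG
  set u : ℝ → ℂ := (Set.Ico (0:ℝ) t).indicator G with hu
  have hfu : ⇑f =ᵐ[volume.restrict (Set.Ico (0:ℝ) t)] u := by
    filter_upwards [hae, ae_restrict_mem measurableSet_Ico] with s h1 h2
    rw [hu, Set.indicator_of_mem h2]
    exact h1
  have hvol : ∀ᵐ τ ∂(volume : Measure ℝ), τ ∈ Set.Ico (0:ℝ) t → f τ = u τ :=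
    (ae_restrict_iff' measurableSet_Ico).mp hfu
  have hInt : IntegrableOn (⇑f) (Set.Ico (0:ℝ) t) volume :=
    (Lp.memLp f).integrable (by norm_num)
  have hu_int : Integrable u volume := by
    have h1 : Integrable ((Set.Ico (0:ℝ) t).indicator ⇑f) volume :=
      (integrable_indicator_iff measurableSet_Ico).2 hInt
    apply h1.congr
    filter_upwards [hvol] with τ hτ
    by_cases h : τ ∈ Set.Ico (0:ℝ) t
    · rw [Set.indicator_of_mem h, hτ h]
    · rw [Set.indicator_of_notMem h, hu, Set.indicator_of_notMem h]
  have ht_null : ∀ᵐ τ ∂(volume : Measure ℝ), τ ≠ t := by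
    have h : (volume : Measure ℝ) {t} = 0 := measure_singleton t
    rw [ae_iff]
    simpa using h
  have hswap : ∀ r ∈ Set.Icc (0:ℝ) t,
      (∫ τ in (0:ℝ)..r, f τ) = ∫ τ in (0:ℝ)..r, u τ := by
    intro r hr
    apply intervalIntegral.integral_congr_ae
    rw [Set.uIoc_of_le hr.1]
    filter_upwards [hvol, ht_null] with τ h1 h2 h3
    exact h1 ⟨h3.1.le, lt_of_le_of_ne (h3.2.trans hr.2) h2⟩
  have hGu : ∀ s ∈ Set.Icc (0:ℝ) t,
      G s = μc * ∫ r in s..t, ∫ τ in (0:ℝ)..r, u τ := by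
    intro s hs
    show μc * (∫ r in s..t, ∫ τ in (0:ℝ)..r, f τ) = _
    congr 1
    apply intervalIntegral.integral_congr
    intro r hr
    rw [Set.uIcc_of_le hs.2] at hr
    exact hswap r ⟨le_trans hs.1 hr.1, hr.2⟩
  have hcons : ∀ s ∈ Set.Ico (0:ℝ) t,
      u s = μc * ∫ r in s..t, ∫ τ in (0:ℝ)..r, u τ := by
    intro s hs
    rw [hu, Set.indicator_of_mem hs]
    exact hGu s ⟨hs.1, hs.2.le⟩
  have hkey := key_ode t ht μc ω hω hωne u hu_int hcons
  refine ⟨μc * ∫ r in (0:ℝ)..t, ∫ τ in (0:ℝ)..r, u τ, ?_, ?_, ?_⟩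
  · filter_upwards [hae, ae_restrict_mem measurableSet_Ico] with s h1 h2
    rw [h1, show (μc * ∫ r in s..t, ∫ τ in (0:ℝ)..r, f τ) = G s from rfl,
      hGu s ⟨h2.1, h2.2.le⟩]
    exact hkey s ⟨h2.1, h2.2.le⟩
  · have h := hkey t ⟨ht.le, le_refl t⟩
    rwa [intervalIntegral.integral_same, mul_zero, eq_comm] at h
  · intro hc
    apply Lp.ext (μ := volume.restrict (Set.Ico (0:ℝ) t))
    have hz : ⇑(0 : Lp ℂ 2 (volume.restrict (Set.Ico (0:ℝ) t)))
        =ᵐ[volume.restrict (Set.Ico (0:ℝ) t)] 0 := Lp.coeFn_zero ℂ 2 _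
    filter_upwards [hae, ae_restrict_mem measurableSet_Ico, hz] with s h1 h2 h3
    rw [h3, Pi.zero_apply, h1,
      show (μc * ∫ r in s..t, ∫ τ in (0:ℝ)..r, f τ) = G s from rfl,
      hGu s ⟨h2.1, h2.2.le⟩, hkey s ⟨h2.1, h2.2.le⟩, hc, zero_mul]

lemma exists_eigenfunction (t k : ℝ) (ht : 0 < t) (hk : k ≠ 0)
    (A : Lp ℂ 2 (volume.restrict (Set.Ico (0:ℝ) t)) →L[ℂ]
         Lp ℂ 2 (volume.restrict (Set.Ico (0:ℝ) t)))
    (hA : ∀ f : Lp ℂ 2 (volume.restrict (Set.Ico (0:ℝ) t)),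
      ∀ᵐ s ∂(volume.restrict (Set.Ico (0:ℝ) t)),
        A f s = ∫ r in s..t, (∫ τ in (0:ℝ)..r, f τ))
    (n : ℕ) (hn : 1 ≤ n) :
    ∃ f, f ≠ 0 ∧ ((k:ℂ)^2) • A f =
      ((k^2 * t^2 / (((n:ℝ) - 1/2)^2 * π^2) : ℝ) : ℂ) • f := by
  haveI := restrict_finite t
  have hn1 : (1:ℝ) ≤ (n:ℝ) := by exact_mod_cast hn
  have hnhalf : (0:ℝ) < (n:ℝ) - 1/2 := by linarith
  set ω₀ : ℝ := ((n:ℝ) - 1/2) * π / t with hω₀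
  have hω₀pos : 0 < ω₀ := div_pos (mul_pos hnhalf Real.pi_pos) ht
  set f₀ : ℝ → ℂ := fun s => (Real.cos (ω₀ * s) : ℂ) with hf₀
  have hcont : Continuous f₀ :=
    Complex.continuous_ofReal.comp (Real.continuous_cos.comp (continuous_const.mul continuous_id))
  have hmem : MemLp f₀ 2 (volume.restrict (Set.Ico (0:ℝ) t)) := by
    refine (memLp_top_of_bound hcont.aestronglyMeasurable 1 (ae_of_all _ fun s => ?_)).mono_exponent le_top
    simp only [hf₀, Complex.norm_real]
    exact Real.abs_cos_le_one _
  set f := hmem.toLp f₀ with hfdef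
  have hcoe : ⇑f =ᵐ[volume.restrict (Set.Ico (0:ℝ) t)] f₀ := hmem.coeFn_toLp
  refine ⟨f, ?_, ?_⟩
  · -- f ≠ 0
    intro h0
    have hz : f₀ =ᵐ[volume.restrict (Set.Ico (0:ℝ) t)] 0 := by
      refine (hcoe.symm.trans ?_)
      rw [h0]
      exact Lp.coeFn_zero ℂ 2 _
    have hvol : ∀ᵐ s ∂(volume : Measure ℝ), s ∈ Set.Ico (0:ℝ) t → f₀ s = 0 :=
      (ae_restrict_iff' measurableSet_Ico).mp hz
    set ε : ℝ := t / (2*n) with hε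
    have hεpos : 0 < ε := div_pos ht (by positivity)
    have hεt : ε < t := by
      rw [hε]
      apply div_lt_self ht
      have : (1:ℝ) ≤ (n:ℝ) := hn1
      linarith
    have hsub : Set.Ico (0:ℝ) ε ⊆ {s | ¬(s ∈ Set.Ico (0:ℝ) t → f₀ s = 0)} := by
      intro s hs
      simp only [Set.mem_setOf_eq, Classical.not_imp]
      refine ⟨⟨hs.1, hs.2.trans hεt⟩, ?_⟩
      simp only [hf₀, ne_eq, Complex.ofReal_eq_zero]
      have hlt : ω₀ * s < π/2 := by
        have h1 : ω₀ * s < ω₀ * ε := by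
          apply mul_lt_mul_of_pos_left hs.2 hω₀pos
        have h2 : ω₀ * ε = ((n:ℝ) - 1/2) * π / (2*n) := by
          rw [hω₀, hε]
          field_simp
        rw [h2] at h1
        refine h1.trans_le ?_
        rw [div_le_div_iff₀ (by positivity) two_pos]
        nlinarith [Real.pi_pos]
      have hge : -(π/2) < ω₀ * s := by
        have : 0 ≤ ω₀ * s := mul_nonneg hω₀pos.le hs.1
        nlinarith [Real.pi_pos]
      exact (Real.cos_pos_of_mem_Ioo ⟨hge, hlt⟩).ne'
    have hnull : (volume : Measure ℝ) {s | ¬(s ∈ Set.Ico (0:ℝ) t → f₀ s = 0)} = 0 :=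
      ae_iff.mp hvol
    have := measure_mono_null hsub hnull
    rw [Real.volume_Ico] at this
    simp only [ENNReal.ofReal_eq_zero, sub_zero] at this
    linarith
  · -- eigen equation
    apply Lp.ext (μ := volume.restrict (Set.Ico (0:ℝ) t))
    have h2 : ⇑(((k:ℂ)^2) • A f) =ᵐ[volume.restrict (Set.Ico (0:ℝ) t)]
        fun s => ((k:ℂ)^2) * (A f) s := by
      filter_upwards [Lp.coeFn_smul ((k:ℂ)^2) (A f)] with s hs
      simpa [smul_eq_mul] using hs
    set lamc : ℂ := ((k^2 * t^2 / (((n:ℝ) - 1/2)^2 * π^2) : ℝ) : ℂ) with hlamc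
    have h3 : ⇑(lamc • f) =ᵐ[volume.restrict (Set.Ico (0:ℝ) t)] fun s => lamc * f s := by
      filter_upwards [Lp.coeFn_smul lamc f] with s hs
      simpa [smul_eq_mul] using hs
    have hvol2 : ∀ᵐ τ ∂(volume : Measure ℝ), τ ∈ Set.Ico (0:ℝ) t → f τ = f₀ τ :=
      (ae_restrict_iff' measurableSet_Ico).mp hcoe
    have ht_null : ∀ᵐ τ ∂(volume : Measure ℝ), τ ≠ t := by
      have h : (volume : Measure ℝ) {t} = 0 := measure_singleton t
      rw [ae_iff]
      simpa using h
    have hswap : ∀ r ∈ Set.Icc (0:ℝ) t,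
        (∫ τ in (0:ℝ)..r, f τ) = ∫ τ in (0:ℝ)..r, f₀ τ := by
      intro r hr
      apply intervalIntegral.integral_congr_ae
      rw [Set.uIoc_of_le hr.1]
      filter_upwards [hvol2, ht_null] with τ e1 e2 e3
      exact e1 ⟨e3.1.le, lt_of_le_of_ne (e3.2.trans hr.2) e2⟩
    have hinner : ∀ r : ℝ, (∫ τ in (0:ℝ)..r, f₀ τ)
        = ((Real.sin (ω₀*r)/ω₀ : ℝ) : ℂ) := by
      intro r
      show (∫ τ in (0:ℝ)..r, ((Real.cos (ω₀ * τ) : ℝ) : ℂ)) = _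
      rw [intervalIntegral.integral_ofReal, int_cos ω₀ hω₀pos.ne' 0 r]
      norm_num
    have hcos_t : Real.cos (ω₀ * t) = 0 := by
      apply Real.cos_eq_zero_iff.mpr
      refine ⟨(n:ℤ) - 1, ?_⟩
      rw [hω₀]
      field_simp
      push_cast
      ring
    have houter : ∀ s : ℝ, (∫ r in s..t, ((Real.sin (ω₀*r)/ω₀ : ℝ) : ℂ))
        = ((Real.cos (ω₀*s)/ω₀^2 : ℝ) : ℂ) := by
      intro s
      rw [intervalIntegral.integral_ofReal]
      congr 1
      rw [intervalIntegral.integral_div, int_sin ω₀ hω₀pos.ne' s t, hcos_t,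
        sub_zero, div_div, ← pow_two]
    filter_upwards [hA f, h2, h3, ae_restrict_mem measurableSet_Ico, hcoe]
      with s e1 e2 e3 hsmem e4
    rw [e2, e3, e1, e4]
    have hout : (∫ r in s..t, ∫ τ in (0:ℝ)..r, f τ)
        = ((Real.cos (ω₀*s)/ω₀^2 : ℝ) : ℂ) := by
      rw [show (∫ r in s..t, ∫ τ in (0:ℝ)..r, f τ)
          = ∫ r in s..t, ((Real.sin (ω₀*r)/ω₀ : ℝ) : ℂ) from
        intervalIntegral.integral_congr (fun r hr => by
          rw [Set.uIcc_of_le hsmem.2.le] at hr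
          rw [hswap r ⟨le_trans hsmem.1 hr.1, hr.2⟩, hinner r])]
      exact houter s
    rw [hout, hf₀]
    show ((k:ℂ)^2) * ((Real.cos (ω₀*s)/ω₀^2 : ℝ) : ℂ) = lamc * ((Real.cos (ω₀*s) : ℝ) : ℂ)
    have hred : (k^2 * t^2 / (((n:ℝ) - 1/2)^2 * π^2)) * Real.cos (ω₀*s)
        = k^2 * (Real.cos (ω₀*s)/ω₀^2) := by
      rw [hω₀]
      field_simp
    rw [hlamc]
    calc ((k:ℂ)^2) * ((Real.cos (ω₀*s)/ω₀^2 : ℝ) : ℂ)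
        = (((k^2 * (Real.cos (ω₀*s)/ω₀^2) : ℝ)) : ℂ) := by push_cast; ring
      _ = (((k^2 * t^2 / (((n:ℝ) - 1/2)^2 * π^2)) * Real.cos (ω₀*s) : ℝ) : ℂ) := by
          rw [hred]
      _ = ((k^2 * t^2 / (((n:ℝ) - 1/2)^2 * π^2) : ℝ) : ℂ) * ((Real.cos (ω₀*s) : ℝ) : ℂ) := by
          push_cast; ring


end Aux

/-- For `t > 0` and `k ≠ 0`, the nonzero eigenvalues of `k² A` on
`L²([0,t); ℂ)`, where `(A f)(s) = ∫_s^t ∫_0^r f(τ) dτ dr`, are exactly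
`λ_n = k² t² / ((n - 1/2)² π²)`, `n = 1, 2, 3, …`, each with one-dimensional
eigenspace spanned by `s ↦ cos((n - 1/2) π s / t)`. -/
theorem stmt_3 (t k : ℝ) (ht : 0 < t) (hk : k ≠ 0)
    (A : Lp ℂ 2 (volume.restrict (Set.Ico (0:ℝ) t)) →L[ℂ]
         Lp ℂ 2 (volume.restrict (Set.Ico (0:ℝ) t)))
    (hA : ∀ f : Lp ℂ 2 (volume.restrict (Set.Ico (0:ℝ) t)),
      ∀ᵐ s ∂(volume.restrict (Set.Ico (0:ℝ) t)),
        A f s = ∫ r in s..t, (∫ τ in (0:ℝ)..r, f τ)) :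
    ∀ lam : ℂ, lam ≠ 0 →
      ((∃ f, f ≠ 0 ∧ ((k:ℂ)^2) • A f = lam • f) ↔
        ∃ n : ℕ, 1 ≤ n ∧ lam = ((k^2 * t^2 / (((n:ℝ) - 1/2)^2 * π^2) : ℝ) : ℂ)) ∧
      (∀ n : ℕ, 1 ≤ n → lam = ((k^2 * t^2 / (((n:ℝ) - 1/2)^2 * π^2) : ℝ) : ℂ) →
        ∀ f, ((k:ℂ)^2) • A f = lam • f →
          ∃ c : ℂ, ∀ᵐ s ∂(volume.restrict (Set.Ico (0:ℝ) t)),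
            f s = c * Complex.cos (((((n:ℝ) - 1/2) * π * s / t : ℝ) : ℂ))) := by
  intro lam hlam
  have hkc : (k:ℂ) ≠ 0 := Complex.ofReal_ne_zero.2 hk
  have hμne : (k:ℂ)^2/lam ≠ 0 := div_ne_zero (pow_ne_zero 2 hkc) hlam
  constructor
  · constructor
    · rintro ⟨f, hf0, hf⟩
      obtain ⟨ω, hω⟩ := IsAlgClosed.exists_pow_nat_eq ((k:ℂ)^2/lam) (n := 2) (by norm_num)
      have hωne : ω ≠ 0 := by
        intro h
        apply hμne
        rw [← hω, h]
        norm_num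
      obtain ⟨c, -, hcb, hc0⟩ := structure_lemma t k ht hk A hA lam hlam ω hω hωne f hf
      have hcne : c ≠ 0 := fun h => hf0 (hc0 h)
      have hcos : Complex.cos (ω * t) = 0 := by
        rcases mul_eq_zero.mp hcb with h | h
        · exact absurd h hcne
        · exact h
      exact eigenvalue_of_cos_zero t k ht hk lam ω hlam hω hcos
    · rintro ⟨n, hn, hlameq⟩
      rw [hlameq]
      exact exists_eigenfunction t k ht hk A hA n hn
  · intro n hn hlameq f hf
    have hn1 : (1:ℝ) ≤ (n:ℝ) := by exact_mod_cast hn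
    have hnhalf : (0:ℝ) < (n:ℝ) - 1/2 := by linarith
    set ω₀ : ℝ := ((n:ℝ) - 1/2) * π / t with hω₀def
    have hω₀pos : 0 < ω₀ := div_pos (mul_pos hnhalf Real.pi_pos) ht
    have hne' : ((n:ℝ) - 1/2) ≠ 0 := hnhalf.ne'
    have hreal : ω₀^2 * (k^2 * t^2 / (((n:ℝ) - 1/2)^2 * π^2)) = k^2 := by
      rw [hω₀def]
      field_simp
      exact div_self (by linarith : ((n:ℝ) * 2 - 1) ≠ 0)
    have hmul : ((ω₀:ℂ))^2 * lam = (k:ℂ)^2 := by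
      rw [hlameq]
      calc ((ω₀:ℂ))^2 * ((k^2 * t^2 / (((n:ℝ) - 1/2)^2 * π^2) : ℝ) : ℂ)
          = ((ω₀^2 * (k^2 * t^2 / (((n:ℝ) - 1/2)^2 * π^2)) : ℝ) : ℂ) := by
            push_cast; ring
        _ = ((k^2 : ℝ) : ℂ) := by rw [hreal]
        _ = (k:ℂ)^2 := by push_cast; ring
    have hω : ((ω₀:ℂ))^2 = (k:ℂ)^2 / lam := by
      rw [eq_div_iff hlam]
      exact hmul
    have hωne : ((ω₀:ℂ)) ≠ 0 := Complex.ofReal_ne_zero.2 hω₀pos.ne'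
    obtain ⟨c, hc, -, -⟩ := structure_lemma t k ht hk A hA lam hlam (ω₀:ℂ) hω hωne f hf
    refine ⟨c, ?_⟩
    filter_upwards [hc] with s hs
    rw [hs]
    congr 1
    rw [hω₀def]
    push_cast
    have htc : (t:ℂ) ≠ 0 := Complex.ofReal_ne_zero.2 ht.ne'
    field_simp
end

section
/- Let K be a symmetric trace class operator on a real Hilbert space H with -1/2 < K ≤ 0, and let μ be the standard Gaussian measure associated to H (white noise measure). Then ∫ exp(-⟨ω, Kω⟩) dμ(ω) = det(Id + 2K)^{-1/2}, where the quadratic form ⟨ω, Kω⟩ is defined via an eigenbasis expansion and det is the Fredholm determinant. -/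
open MeasureTheory ProbabilityTheory Real Filter
open scoped ENNReal NNReal

private lemma stmt11_gauss_real_int {c : ℝ} (hc : -(1/2 : ℝ) < c) :
    ∫ x : ℝ, gaussianPDFReal 0 1 x * Real.exp (-(c * x^2))
      = (1 + 2*c) ^ (-(1/2 : ℝ)) := by
  have hpos : (0:ℝ) < c + 1/2 := by linarith
  have h1 : (0:ℝ) < 1 + 2*c := by linarith
  have hfun : (fun x : ℝ => gaussianPDFReal 0 1 x * Real.exp (-(c * x^2)))
      = fun x : ℝ => (Real.sqrt (2*π))⁻¹ * Real.exp (-(c+1/2) * x^2) := by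
    ext x
    simp only [gaussianPDFReal, NNReal.coe_one, mul_one, sub_zero]
    rw [mul_assoc, ← Real.exp_add]
    ring_nf
  rw [hfun, integral_const_mul, integral_gaussian]
  rw [Real.rpow_neg h1.le, ← Real.sqrt_eq_rpow]
  rw [Real.sqrt_div pi_pos.le, Real.sqrt_mul (by norm_num : (0:ℝ) ≤ 2),
    show (1:ℝ) + 2*c = 2 * (c + 1/2) by ring,
    Real.sqrt_mul (by norm_num : (0:ℝ) ≤ 2)]
  have hπ : Real.sqrt π ≠ 0 := ne_of_gt (Real.sqrt_pos.2 pi_pos)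
  have h2 : Real.sqrt 2 ≠ 0 := by positivity
  have h3 : Real.sqrt (c + 1/2) ≠ 0 := ne_of_gt (Real.sqrt_pos.2 hpos)
  field_simp

private lemma stmt11_gauss_lintegral {c : ℝ} (hc : -(1/2 : ℝ) < c) :
    ∫⁻ x, ENNReal.ofReal (Real.exp (-(c * x^2))) ∂(gaussianReal 0 1)
      = ENNReal.ofReal ((1 + 2*c) ^ (-(1/2 : ℝ))) := by
  have hpos : (0:ℝ) < c + 1/2 := by linarith
  rw [gaussianReal_of_var_ne_zero 0 one_ne_zero]
  rw [lintegral_withDensity_eq_lintegral_mul _ (measurable_gaussianPDF 0 1)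
    (by fun_prop)]
  have : ∀ x : ℝ, (gaussianPDF 0 1 * fun x => ENNReal.ofReal (Real.exp (-(c * x^2)))) x
      = ENNReal.ofReal (gaussianPDFReal 0 1 x * Real.exp (-(c * x^2))) := by
    intro x
    simp only [Pi.mul_apply, gaussianPDF]
    rw [← ENNReal.ofReal_mul (gaussianPDFReal_nonneg 0 1 x)]
  simp_rw [this]
  rw [← ofReal_integral_eq_lintegral_ofReal]
  · rw [stmt11_gauss_real_int hc]
  · have hfun : (fun x : ℝ => gaussianPDFReal 0 1 x * Real.exp (-(c * x^2)))
        = fun x : ℝ => (Real.sqrt (2*π))⁻¹ * Real.exp (-(c+1/2) * x^2) := by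
      ext x
      simp only [gaussianPDFReal, NNReal.coe_one, mul_one, sub_zero]
      rw [mul_assoc, ← Real.exp_add]
      ring_nf
    rw [hfun]
    exact (integrable_exp_neg_mul_sq hpos).const_mul _
  · exact ae_of_all _ fun x =>
      mul_nonneg (gaussianPDFReal_nonneg 0 1 x) (Real.exp_nonneg _)

private lemma stmt11_sq_lintegral_lt_top :
    ∫⁻ x, ENNReal.ofReal (x^2) ∂(gaussianReal 0 1) < ⊤ := by
  rw [gaussianReal_of_var_ne_zero 0 one_ne_zero]
  rw [lintegral_withDensity_eq_lintegral_mul _ (measurable_gaussianPDF 0 1)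
    (by fun_prop)]
  have heq : ∀ x : ℝ, (gaussianPDF 0 1 * fun x => ENNReal.ofReal (x^2)) x
      = ENNReal.ofReal (gaussianPDFReal 0 1 x * x^2) := by
    intro x
    simp only [Pi.mul_apply, gaussianPDF]
    rw [← ENNReal.ofReal_mul (gaussianPDFReal_nonneg 0 1 x)]
  simp_rw [heq]
  have hint : Integrable (fun x : ℝ => gaussianPDFReal 0 1 x * x^2) := by
    have hfun : (fun x : ℝ => gaussianPDFReal 0 1 x * x^2)
        = fun x : ℝ => (Real.sqrt (2*π))⁻¹ * (x ^ (2:ℝ) * Real.exp (-(1/2 : ℝ) * x^2)) := by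
      ext x
      rw [show (2:ℝ) = ((2:ℕ):ℝ) by norm_num, Real.rpow_natCast x 2]
      simp only [gaussianPDFReal, NNReal.coe_one, mul_one, sub_zero]
      ring_nf
    rw [hfun]
    exact (integrable_rpow_mul_exp_neg_mul_sq (by norm_num) (by norm_num)).const_mul _
  rw [← ofReal_integral_eq_lintegral_ofReal hint
    (ae_of_all _ fun x => mul_nonneg (gaussianPDFReal_nonneg 0 1 x) (sq_nonneg x))]
  exact ENNReal.ofReal_lt_top

private lemma stmt11_prod_lintegral {Ω : Type*} [MeasurableSpace Ω] (μ : Measure Ω)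
    [IsProbabilityMeasure μ]
    (X : ℕ → Ω → ℝ) (hXmeas : ∀ n, Measurable (X n))
    (hindep : iIndepFun X μ)
    (g : ℕ → ℝ → ℝ≥0∞) (hg : ∀ n, Measurable (g n)) (N : ℕ) :
    ∫⁻ ω, ∏ n ∈ Finset.range N, g n (X n ω) ∂μ
      = ∏ n ∈ Finset.range N, ∫⁻ ω, g n (X n ω) ∂μ := by
  have hind2 : iIndepFun (fun n => (g n) ∘ (X n)) μ :=
    hindep.comp g hg
  have hmeas : ∀ n, Measurable ((g n) ∘ (X n)) := fun n => (hg n).comp (hXmeas n)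
  induction N with
  | zero => simp
  | succ N ih =>
    simp only [Finset.prod_range_succ]
    rw [← ih]
    have hindf := hind2.indepFun_prod_range_succ hmeas N
    have := lintegral_mul_eq_lintegral_mul_lintegral_of_indepFun
      (f := ∏ j ∈ Finset.range N, (g j) ∘ (X j)) (g := (g N) ∘ (X N))
      (by rw [show (∏ j ∈ Finset.range N, (g j) ∘ (X j))
              = fun a => ∏ j ∈ Finset.range N, g j (X j a) by ext a; simp]
          exact Finset.measurable_prod _ fun i _ => hmeas i) (hmeas N) hindf
    simp only [Pi.mul_apply, Finset.prod_apply, Function.comp_apply] at this ⊢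
    exact this

private lemma stmt11_hasProd_one_add {k : ℕ → ℝ} (hk : ∀ n, -(1/2 : ℝ) < k n ∧ k n ≤ 0)
    (hsum : Summable k) : ∃ P : ℝ, 0 < P ∧ HasProd (fun n => 1 + 2 * k n) P := by
  have hpos : ∀ n, (0:ℝ) < 1 + 2 * k n := fun n => by have := (hk n).1; linarith
  have htend : Filter.Tendsto k atTop (nhds 0) := hsum.tendsto_atTop_zero
  obtain ⟨N, hN⟩ := (htend.eventually
    (eventually_ge_nhds (by norm_num : (-1/8 : ℝ) < 0))).exists_forall_of_atTop
  have hlog : Summable (fun n => Real.log (1 + 2 * k n)) := by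
    rw [← summable_neg_iff]
    apply (summable_nat_add_iff N).1
    have hb : Summable (fun n => 4 * (-(k (n + N)))) :=
      (((summable_nat_add_iff N).2 hsum).neg).mul_left 4
    refine Summable.of_nonneg_of_le (fun n => ?_) (fun n => ?_) hb
    · simp only [neg_nonneg]
      exact Real.log_nonpos (by have := hpos (n + N); linarith)
        (by have := (hk (n+N)).2; linarith)
    · have h8 : -(1/8 : ℝ) ≤ k (n + N) := by
        have := hN (n + N) (Nat.le_add_left N n); linarith
      have hp : (0:ℝ) < 1 + 2 * k (n + N) := hpos (n + N)
      have hle' : -Real.log (1 + 2 * k (n + N)) = Real.log (1 + 2 * k (n + N))⁻¹ :=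
        (Real.log_inv _).symm
      rw [hle']
      have hle := Real.log_le_sub_one_of_pos (inv_pos.2 hp)
      have hinv : (1 + 2 * k (n + N)) * (1 + 2 * k (n + N))⁻¹ = 1 :=
        mul_inv_cancel₀ (ne_of_gt hp)
      have hik : (0:ℝ) ≤ (1 + 2 * k (n + N))⁻¹ := by positivity
      have hk0 : k (n + N) ≤ 0 := (hk (n + N)).2
      nlinarith [hinv, hik, h8, hk0, hle]
  have hP := (hlog.hasSum).rexp
  refine ⟨Real.exp (∑' n, Real.log (1 + 2 * k n)), Real.exp_pos _, ?_⟩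
  have : (rexp ∘ fun n => Real.log (1 + 2 * k n)) = fun n => 1 + 2 * k n := by
    ext n; simp [Real.exp_log (hpos n)]
  rwa [this] at hP

/-- Let `K` be a symmetric trace class operator with
`-1/2 < K ≤ 0`, given in an eigenbasis by eigenvalues `k n` (so `K` trace class
means `∑ |k n| < ∞`), and let `μ` be the associated white noise (standard
Gaussian) measure, realized through the i.i.d. standard Gaussian coordinates
`X n = ⟨e n, ·⟩`. Then with `⟨ω, K ω⟩ = ∑ n, k n ⟨e n, ω⟩²`,
`∫ exp(-⟨ω, K ω⟩) dμ(ω) = det(Id + 2K)^{-1/2} = (∏ n, (1 + 2 k n))^{-1/2}`. -/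
theorem stmt_11 {Ω : Type*} [MeasurableSpace Ω] (μ : Measure Ω) [IsProbabilityMeasure μ]
    (X : ℕ → Ω → ℝ) (hXmeas : ∀ n, Measurable (X n))
    (hindep : iIndepFun X μ)
    (hgauss : ∀ n, μ.map (X n) = gaussianReal 0 1)
    (k : ℕ → ℝ) (hk : ∀ n, -(1/2 : ℝ) < k n ∧ k n ≤ 0) (hsum : Summable k) :
    ∫ ω, Real.exp (-∑' n, k n * (X n ω)^2) ∂μ
      = (∏' n, (1 + 2 * k n)) ^ (-(1/2 : ℝ)) := by
  obtain ⟨P, hPpos, hP⟩ := stmt11_hasProd_one_add hk hsum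
  have hpos1 : ∀ n, (0:ℝ) < 1 + 2 * k n := fun n => by have := (hk n).1; linarith
  set g : ℕ → ℝ → ℝ≥0∞ := fun n x => ENNReal.ofReal (Real.exp (-(k n * x^2))) with hg_def
  have hg : ∀ n, Measurable (g n) := fun n => by
    apply ENNReal.measurable_ofReal.comp
    fun_prop
  -- value of each coordinate integral
  have hI : ∀ n, ∫⁻ ω, g n (X n ω) ∂μ = ENNReal.ofReal ((1 + 2 * k n) ^ (-(1/2:ℝ))) := by
    intro n
    rw [← lintegral_map (hg n) (hXmeas n), hgauss n]
    exact stmt11_gauss_lintegral (hk n).1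
  -- partial sums / products
  set S : ℕ → Ω → ℝ := fun N ω => ∑ n ∈ Finset.range N, k n * X n ω ^ 2 with hS_def
  have hSmeas : ∀ N, Measurable (S N) := fun N =>
    Finset.measurable_sum _ fun n _ => by fun_prop
  have hpoint : ∀ N ω, ENNReal.ofReal (Real.exp (-(S N ω)))
      = ∏ n ∈ Finset.range N, g n (X n ω) := by
    intro N ω
    rw [hS_def]
    simp only
    rw [← Finset.sum_neg_distrib, Real.exp_sum,
      ENNReal.ofReal_prod_of_nonneg (fun i _ => Real.exp_nonneg _)]
  have key : ∀ N, ∫⁻ ω, ENNReal.ofReal (Real.exp (-(S N ω))) ∂μ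
      = ENNReal.ofReal (∏ n ∈ Finset.range N, (1 + 2 * k n) ^ (-(1/2:ℝ))) := by
    intro N
    simp_rw [hpoint]
    rw [stmt11_prod_lintegral μ X hXmeas hindep g hg N]
    simp_rw [hI]
    rw [← ENNReal.ofReal_prod_of_nonneg
      (fun i _ => Real.rpow_nonneg (hpos1 i).le _)]
  -- a.e. summability
  have hae : ∀ᵐ ω ∂μ, Summable fun n => -(k n) * X n ω ^ 2 := by
    have hmeas_sq : ∀ n : ℕ, Measurable fun ω => ENNReal.ofReal (-(k n) * X n ω ^ 2) :=
      fun n => ENNReal.measurable_ofReal.comp (by fun_prop)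
    have hfin : ∫⁻ ω, ∑' n, ENNReal.ofReal (-(k n) * X n ω ^ 2) ∂μ < ⊤ := by
      rw [lintegral_tsum fun n => (hmeas_sq n).aemeasurable]
      have hval : ∀ n : ℕ, ∫⁻ ω, ENNReal.ofReal (-(k n) * X n ω ^ 2) ∂μ
          = ENNReal.ofReal (-(k n)) * ∫⁻ x, ENNReal.ofReal (x^2) ∂(gaussianReal 0 1) := by
        intro n
        simp_rw [ENNReal.ofReal_mul (neg_nonneg.2 (hk n).2)]
        rw [lintegral_const_mul _
          (show Measurable fun ω => ENNReal.ofReal (X n ω ^ 2) by measurability)]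
        congr 1
        rw [← lintegral_map
          (show Measurable fun x : ℝ => ENNReal.ofReal (x ^ 2) by measurability) (hXmeas n),
          hgauss n]
      simp_rw [hval]
      rw [ENNReal.tsum_mul_right]
      apply ENNReal.mul_lt_top _ stmt11_sq_lintegral_lt_top
      rw [← ENNReal.ofReal_tsum_of_nonneg (fun n => neg_nonneg.2 (hk n).2) hsum.neg]
      exact ENNReal.ofReal_lt_top
    filter_upwards [ae_lt_top (Measurable.ennreal_tsum hmeas_sq) hfin.ne] with ω hω
    have hnn : ∀ n, (0:ℝ) ≤ -(k n) * X n ω ^ 2 :=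
      fun n => mul_nonneg (neg_nonneg.2 (hk n).2) (sq_nonneg _)
    have hcoe : ∀ n : ℕ, ENNReal.ofReal (-(k n) * X n ω ^ 2)
        = ((Real.toNNReal (-(k n) * X n ω ^ 2) : ℝ≥0) : ℝ≥0∞) := fun n => rfl
    simp_rw [hcoe] at hω
    have hsumm := ENNReal.tsum_coe_ne_top_iff_summable.1 hω.ne
    have := NNReal.summable_coe.2 hsumm
    refine this.congr fun n => ?_
    exact Real.coe_toNNReal _ (hnn n)
  -- monotonicity
  have hmono : ∀ ω, Monotone fun N => ENNReal.ofReal (Real.exp (-(S N ω))) := by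
    intro ω
    apply monotone_nat_of_le_succ
    intro N
    apply ENNReal.ofReal_le_ofReal
    apply Real.exp_le_exp.2
    simp only [neg_le_neg_iff, hS_def]
    rw [Finset.sum_range_succ]
    have : k N * X N ω ^ 2 ≤ 0 :=
      mul_nonpos_of_nonpos_of_nonneg (hk N).2 (sq_nonneg _)
    linarith
  -- a.e. tendsto (real version)
  have htendR : ∀ᵐ ω ∂μ, Tendsto (fun N => Real.exp (-(S N ω))) atTop
      (nhds (Real.exp (-∑' n, k n * (X n ω)^2))) := by
    filter_upwards [hae] with ω hω
    have hsummable : Summable fun n => k n * X n ω ^ 2 := by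
      have := hω.neg
      refine this.congr fun n => by ring
    have htends := hsummable.hasSum.tendsto_sum_nat
    exact (Real.continuous_exp.tendsto _).comp htends.neg
  have htend : ∀ᵐ ω ∂μ, Tendsto (fun N => ENNReal.ofReal (Real.exp (-(S N ω)))) atTop
      (nhds (ENNReal.ofReal (Real.exp (-∑' n, k n * (X n ω)^2)))) := by
    filter_upwards [htendR] with ω hω
    exact (ENNReal.continuous_ofReal.tendsto _).comp hω
  -- monotone convergence
  have hMCT := lintegral_tendsto_of_tendsto_of_monotone
    (f := fun N ω => ENNReal.ofReal (Real.exp (-(S N ω))))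
    (F := fun ω => ENNReal.ofReal (Real.exp (-∑' n, k n * (X n ω)^2)))
    (fun N => ((hSmeas N).neg.exp.ennreal_ofReal).aemeasurable)
    (ae_of_all _ hmono) htend
  -- limit of the RHS
  have h1 : Tendsto (fun N => ∏ n ∈ Finset.range N, (1 + 2 * k n)) atTop (nhds P) :=
    hP.tendsto_prod_nat
  have h2 : Tendsto (fun N => (∏ n ∈ Finset.range N, (1 + 2 * k n)) ^ (-(1/2:ℝ)))
      atTop (nhds (P ^ (-(1/2:ℝ)))) :=
    ((Real.continuousAt_rpow_const P _ (Or.inl hPpos.ne')).tendsto).comp h1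
  have h3 : Tendsto (fun N => ENNReal.ofReal
      (∏ n ∈ Finset.range N, (1 + 2 * k n) ^ (-(1/2:ℝ)))) atTop
      (nhds (ENNReal.ofReal (P ^ (-(1/2:ℝ))))) := by
    have heqp : ∀ N, (∏ n ∈ Finset.range N, (1 + 2 * k n) ^ (-(1/2:ℝ)))
        = (∏ n ∈ Finset.range N, (1 + 2 * k n)) ^ (-(1/2:ℝ)) := fun N =>
      Real.finset_prod_rpow _ _ (fun i _ => (hpos1 i).le) _
    simp_rw [heqp]
    exact (ENNReal.continuous_ofReal.tendsto _).comp h2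
  have hF : ∫⁻ ω, ENNReal.ofReal (Real.exp (-∑' n, k n * (X n ω)^2)) ∂μ
      = ENNReal.ofReal (P ^ (-(1/2:ℝ))) := by
    refine tendsto_nhds_unique ?_ h3
    have : (fun N => ∫⁻ ω, ENNReal.ofReal (Real.exp (-(S N ω))) ∂μ)
        = fun N => ENNReal.ofReal (∏ n ∈ Finset.range N, (1 + 2 * k n) ^ (-(1/2:ℝ))) :=
      funext key
    rw [← this]
    exact hMCT
  -- conclude
  have haesm : AEStronglyMeasurable (fun ω => Real.exp (-∑' n, k n * (X n ω)^2)) μ := by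
    have := aemeasurable_of_tendsto_metrizable_ae atTop
      (f := fun N ω => Real.exp (-(S N ω)))
      (g := fun ω => Real.exp (-∑' n, k n * (X n ω)^2))
      (fun N => ((hSmeas N).neg.exp).aemeasurable) htendR
    exact this.aestronglyMeasurable
  rw [integral_eq_lintegral_of_nonneg_ae (ae_of_all _ fun ω => Real.exp_nonneg _) haesm]
  rw [hF, ENNReal.toReal_ofReal (Real.rpow_nonneg hPpos.le _), hP.tprod_eq]
end

section
/- Let η ∈ L²(ℝ;ℝ) with ⟨η,η⟩ > 0, x ∈ ℝ, and μ the white noise measure. The function F(f) = (2π⟨η,η⟩)^{-1/2} exp(-(i⟨η,f⟩ - x)²/(2⟨η,η⟩) - ½⟨f,f⟩), f ∈ S(ℝ), satisfies: (i) for all f, g ∈ S(ℝ), λ ↦ F(λf + g) extends to an entire function on ℂ; (ii) there exist constants C, D > 0 with |F(zf)| ≤ C exp(D|z|²‖f‖²) for all z ∈ ℂ, f ∈ S(ℝ). -/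
open MeasureTheory Real

/-- The `L²`-pairing `⟨η, f⟩ = ∫ η(s) f(s) ds`. -/
noncomputable def l2Pair (η : ℝ → ℝ) (f : ℝ → ℝ) : ℝ := ∫ s, η s * f s

/-- The T-transform of Donsker's delta `δ₀(⟨η,·⟩ - x)` evaluated at a Schwartz
function `f`. -/
noncomputable def donskerT (η : ℝ → ℝ) (x : ℝ) (f : SchwartzMap ℝ ℝ) : ℂ :=
  (((2 * π * l2Pair η η) ^ (-(1/2 : ℝ)) : ℝ) : ℂ) *
    Complex.exp (-(Complex.I * (l2Pair η (⇑f)) - (x : ℂ))^2 / (2 * (l2Pair η η : ℂ))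
      - ((l2Pair (⇑f) (⇑f) : ℝ) : ℂ) / 2)

/-- The canonical entire extension of `z ↦ donskerT η x (z f)`. -/
noncomputable def donskerTExt (η : ℝ → ℝ) (x : ℝ) (z : ℂ) (f : SchwartzMap ℝ ℝ) : ℂ :=
  (((2 * π * l2Pair η η) ^ (-(1/2 : ℝ)) : ℝ) : ℂ) *
    Complex.exp (-(Complex.I * z * (l2Pair η (⇑f)) - (x : ℂ))^2 / (2 * (l2Pair η η : ℂ))
      - z^2 * ((l2Pair (⇑f) (⇑f) : ℝ) : ℂ) / 2)

lemma schwartz_memL2 (f : SchwartzMap ℝ ℝ) : MemLp (⇑f) 2 volume := by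
  rw [memLp_two_iff_integrable_sq f.continuous.aestronglyMeasurable]
  have h : Integrable (fun s => f s * f s) volume :=
    (f.integrable (μ := volume)).bdd_mul f.continuous.aestronglyMeasurable
      (c := (SchwartzMap.seminorm ℝ 0 0) f) (Filter.Eventually.of_forall fun x => f.norm_le_seminorm ℝ x)
  simpa [pow_two] using h

lemma l2_integrable_mul {u v : ℝ → ℝ} (hu : MemLp u 2 volume) (hv : MemLp v 2 volume) :
    Integrable (fun s => u s * v s) volume := by
  have h := L2.integrable_inner (𝕜 := ℝ) (hu.toLp u) (hv.toLp v)
  refine h.congr ?_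
  filter_upwards [hu.coeFn_toLp, hv.coeFn_toLp] with s h1 h2
  simp [h1, h2, RCLike.inner_apply, mul_comm]

lemma l2_inner_eq {u v : ℝ → ℝ} (hu : MemLp u 2 volume) (hv : MemLp v 2 volume) :
    (inner ℝ (hu.toLp u) (hv.toLp v) : ℝ) = ∫ s, u s * v s := by
  rw [L2.inner_def]
  refine integral_congr_ae ?_
  filter_upwards [hu.coeFn_toLp, hv.coeFn_toLp] with s h1 h2
  simp [h1, h2, RCLike.inner_apply, mul_comm]

lemma l2_cauchy_schwarz {u v : ℝ → ℝ} (hu : MemLp u 2 volume) (hv : MemLp v 2 volume) :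
    (∫ s, u s * v s)^2 ≤ (∫ s, u s * u s) * (∫ s, v s * v s) := by
  have key := real_inner_mul_inner_self_le (hu.toLp u) (hv.toLp v)
  rw [l2_inner_eq hu hv, l2_inner_eq hu hu, l2_inner_eq hv hv] at key
  nlinarith [key]

lemma key_ineq (t a p x zr zi : ℝ) (ht : 0 < t) (hp : 0 ≤ p) (hcs : a^2 ≤ t*p) :
    ((zr^2-zi^2)*a^2 - 2*zi*(a*x) - x^2)/(2*t) - ((zr^2-zi^2)*p)/2 ≤ (zr^2+zi^2)*p := by
  have h2t : (0:ℝ) < 2*t := by positivity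
  have heq : ((zr^2-zi^2)*a^2 - 2*zi*(a*x) - x^2)/(2*t) - ((zr^2-zi^2)*p)/2
      = ((zr^2-zi^2)*a^2 - 2*zi*(a*x) - x^2 - t*((zr^2-zi^2)*p))/(2*t) := by
    field_simp
  rw [heq, div_le_iff₀ h2t]
  nlinarith [sq_nonneg (x + a*zi), mul_nonneg (sub_nonneg.2 hcs) (sq_nonneg zr),
    mul_nonneg (mul_nonneg ht.le hp) (sq_nonneg zi),
    mul_nonneg (mul_nonneg ht.le hp) (sq_nonneg zr)]

lemma re_compute (z : ℂ) (t a p x : ℝ) (ht : 0 < t) :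
    (-(Complex.I*z*(a:ℂ) - (x:ℂ))^2 / (2*(t:ℂ)) - z^2*((p:ℝ):ℂ)/2).re
      = ((z.re^2-z.im^2)*a^2 - 2*z.im*(a*x) - x^2)/(2*t) - ((z.re^2-z.im^2)*p)/2 := by
  have hw : (-(Complex.I*z*(a:ℂ) - (x:ℂ))^2 / (2*(t:ℂ)) - z^2*((p:ℝ):ℂ)/2 : ℂ)
      = (z^2*((a^2:ℝ):ℂ) + 2*Complex.I*z*(((a*x):ℝ):ℂ) - ((x^2:ℝ):ℂ)) / (((2*t:ℝ)):ℂ)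
        - (z^2*(p:ℂ))/(((2:ℝ)):ℂ) := by
    push_cast
    have ht' : (t:ℂ) ≠ 0 := by exact_mod_cast ht.ne'
    field_simp
    linear_combination (-(z^2*(a:ℂ)^2)) * Complex.I_sq
  rw [hw, Complex.sub_re, Complex.div_ofReal_re, Complex.div_ofReal_re]
  congr 1
  · congr 1
    simp [Complex.add_re, Complex.sub_re, Complex.mul_re, Complex.mul_im, pow_two]
    ring
  · congr 1
    simp [Complex.mul_re, pow_two, Complex.mul_im]

/-- For `η ∈ L²(ℝ;ℝ)` with `⟨η,η⟩ > 0` and `x ∈ ℝ`, the function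
`F(f) = (2π⟨η,η⟩)^{-1/2} exp(-(i⟨η,f⟩ - x)²/(2⟨η,η⟩) - ½⟨f,f⟩)` on Schwartz
space is a U-functional: (i) for all `f, g`, `λ ↦ F(λ f + g)` extends to an
entire function on `ℂ`; (ii) there are constants `C, D > 0` with
`|F(z f)| ≤ C exp(D |z|² ‖f‖²)` for all `z ∈ ℂ` and Schwartz `f`. -/
theorem stmt_13 (η : ℝ → ℝ) (hη : MeasureTheory.MemLp η 2 volume)
    (hpos : 0 < l2Pair η η) (x : ℝ) :
    (∀ f g : SchwartzMap ℝ ℝ, ∃ Φ : ℂ → ℂ, Differentiable ℂ Φ ∧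
      ∀ lam : ℝ, Φ lam = donskerT η x (lam • f + g)) ∧
    (∃ C D : ℝ, 0 < C ∧ 0 < D ∧ ∀ (z : ℂ) (f : SchwartzMap ℝ ℝ),
      ‖donskerTExt η x z f‖ ≤ C * Real.exp (D * ‖z‖^2 * l2Pair (⇑f) (⇑f))) := by
  set t := l2Pair η η with htdef
  constructor
  · intro f g
    have hf2 := schwartz_memL2 f
    have hg2 := schwartz_memL2 g
    have hηf := l2_integrable_mul hη hf2
    have hηg := l2_integrable_mul hη hg2
    have hff := l2_integrable_mul hf2 hf2
    have hfg := l2_integrable_mul hf2 hg2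
    have hgg := l2_integrable_mul hg2 hg2
    let a := l2Pair η ⇑f
    let b := l2Pair η ⇑g
    let p := l2Pair (⇑f) (⇑f)
    let q := l2Pair (⇑f) (⇑g)
    let r := l2Pair (⇑g) (⇑g)
    refine ⟨fun z => (((2 * π * t) ^ (-(1/2 : ℝ)) : ℝ) : ℂ) *
      Complex.exp (-(Complex.I * (z*(a:ℂ)+(b:ℂ)) - (x : ℂ))^2 / (2 * (t : ℂ))
        - (z^2*(p:ℂ) + 2*z*(q:ℂ) + (r:ℂ)) / 2), ?_, ?_⟩
    · apply Differentiable.const_mul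
      apply Complex.differentiable_exp.comp
      apply Differentiable.sub
      · apply Differentiable.div_const
        apply Differentiable.neg
        apply Differentiable.pow
        fun_prop
      · apply Differentiable.div_const
        fun_prop
    · intro lam
      have hcoe : ⇑(lam • f + g) = fun s => lam * f s + g s := by
        funext s; simp [smul_eq_mul]
      have hA : l2Pair η ⇑(lam • f + g) = lam * a + b := by
        simp only [l2Pair, hcoe]
        rw [show (fun s => η s * (lam * f s + g s))
            = fun s => lam * (η s * f s) + η s * g s from funext fun s => by ring,
          integral_add (hηf.const_mul lam) hηg, integral_const_mul]
        rfl
      have hB : l2Pair ⇑(lam • f + g) ⇑(lam • f + g) = lam^2 * p + 2 * lam * q + r := by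
        simp only [l2Pair, hcoe]
        have i1 : Integrable (fun s => lam^2 * (f s * f s)) volume := hff.const_mul _
        have i2 : Integrable (fun s => (2*lam) * (f s * g s)) volume := hfg.const_mul _
        have e1 : ∫ s, (lam * f s + g s) * (lam * f s + g s)
            = ∫ s, (lam^2 * (f s * f s) + (2*lam) * (f s * g s)) + g s * g s :=
          integral_congr_ae (Filter.Eventually.of_forall fun s => by ring)
        have e2 : ∫ s, (lam^2 * (f s * f s) + (2*lam) * (f s * g s)) + g s * g s
            = (∫ s, lam^2 * (f s * f s) + (2*lam) * (f s * g s)) + ∫ s, g s * g s :=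
          integral_add (i1.add i2) hgg
        have e3 : ∫ s, lam^2 * (f s * f s) + (2*lam) * (f s * g s)
            = (∫ s, lam^2 * (f s * f s)) + ∫ s, (2*lam) * (f s * g s) :=
          integral_add i1 i2
        rw [e1, e2, e3, integral_const_mul, integral_const_mul]
        show _ = lam ^ 2 * l2Pair (⇑f) (⇑f) + 2 * lam * l2Pair (⇑f) (⇑g) + l2Pair (⇑g) (⇑g)
        simp only [l2Pair]
      simp only [donskerT, hA, hB, ← htdef]
      congr 2
      push_cast
      ring
  · refine ⟨(2 * π * t) ^ (-(1/2 : ℝ)), 1, ?_, one_pos, ?_⟩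
    · exact Real.rpow_pos_of_pos (by positivity) _
    · intro z f
      have hf2 := schwartz_memL2 f
      set a := l2Pair η ⇑f with hadef
      set p := l2Pair (⇑f) (⇑f) with hpdef
      have hp : 0 ≤ p := integral_nonneg fun s => mul_self_nonneg _
      have hcs : a^2 ≤ t * p := l2_cauchy_schwarz hη hf2
      rw [donskerTExt]
      rw [norm_mul, Complex.norm_exp,
        Complex.norm_real, Real.norm_eq_abs, abs_of_pos (Real.rpow_pos_of_pos (by positivity) _)]
      rw [← htdef, ← hadef, ← hpdef]
      apply mul_le_mul_of_nonneg_left _ (Real.rpow_pos_of_pos (by positivity) _).le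
      rw [Real.exp_le_exp]
      rw [re_compute z t a p x hpos]
      have hz : ‖z‖^2 = z.re^2 + z.im^2 := by
        rw [Complex.sq_norm, Complex.normSq_apply]; ring
      rw [hz, one_mul]
      exact key_ineq t a p x z.re z.im hpos hp hcs
end
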